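/- The generating function identity: the sum over n from 0 to MN of p(M,N,n)·q^n equals the Gaussian binomial coefficient [M+N choose N]_q. -/

import Mathlib

/-- The number of partitions of n into at most N parts, each of size at most M. -/
def restrictedPartitions (M N n : ℕ) : ℕ :=
  ((Finset.univ : Finset (Fin N → Fin (M + 1))).filter
    (fun f => (∀ i j : Fin N, i ≤ j → (f j : ℕ) ≤ (f i : ℕ)) ∧
      ∑ i, (f i : ℕ) = n)).card

lemma restrictedPartitions_zero_right (M n : ℕ) :
    restrictedPartitions M 0 n = if n = 0 then 1 else 0 := by
  unfold restrictedPartitions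
  split_ifs with h
  · subst h
    rw [Finset.filter_true_of_mem, Finset.card_univ]
    · simp
    · intro f _
      exact ⟨fun i => i.elim0, by simp⟩
  · rw [Finset.card_eq_zero, Finset.filter_eq_empty_iff]
    intro f _ hf
    exact h (hf.2.symm.trans (by simp))

lemma restrictedPartitions_vanish (M N n : ℕ) (h : M * N < n) :
    restrictedPartitions M N n = 0 := by
  unfold restrictedPartitions
  rw [Finset.card_eq_zero, Finset.filter_eq_empty_iff]
  intro f _ hf
  have hle : ∑ i, (f i : ℕ) ≤ ∑ _i : Fin N, M :=
    Finset.sum_le_sum fun i _ => Nat.lt_succ_iff.mp (f i).isLt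
  simp only [Finset.sum_const, Finset.card_univ, Fintype.card_fin, smul_eq_mul] at hle
  rw [Nat.mul_comm] at hle
  omega

lemma restrictedPartitions_rec (M N n : ℕ) :
    restrictedPartitions (M + 1) (N + 1) n
      = restrictedPartitions (M + 1) N n
        + if N + 1 ≤ n then restrictedPartitions M (N + 1) (n - (N + 1)) else 0 := by
  classical
  unfold restrictedPartitions
  set Q : (Fin (N + 1) → Fin (M + 2)) → Prop :=
    fun f => (∀ i j : Fin (N + 1), i ≤ j → (f j : ℕ) ≤ (f i : ℕ)) ∧ ∑ i, (f i : ℕ) = n with hQ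
  rw [← Finset.card_filter_add_card_filter_not
      (s := Finset.univ.filter Q) (p := fun f => f (Fin.last N) = 0)]
  congr 1
  · -- f (last) = 0 : bijection with (M+1, N, n)
    rw [Finset.filter_filter]
    refine Finset.card_nbij' (fun f => Fin.init f) (fun g => Fin.snoc g 0) ?_ ?_ ?_ ?_
    · intro f hf
      simp only [Finset.mem_coe, Finset.mem_filter, Finset.mem_univ, true_and, hQ] at hf ⊢
      obtain ⟨⟨hmono, hsum⟩, hlast⟩ := hf
      refine ⟨fun i j hij => hmono i.castSucc j.castSucc (by simpa using hij), ?_⟩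
      rw [Fin.sum_univ_castSucc] at hsum
      simpa [Fin.init, hlast] using hsum
    · intro g hg
      simp only [Finset.mem_coe, Finset.mem_filter, Finset.mem_univ, true_and, hQ] at hg ⊢
      obtain ⟨hmono, hsum⟩ := hg
      refine ⟨⟨?_, ?_⟩, ?_⟩
      · intro i j hij
        rcases Fin.eq_castSucc_or_eq_last j with ⟨j', rfl⟩ | hj
        · rcases Fin.eq_castSucc_or_eq_last i with ⟨i', rfl⟩ | hi
          · simp only [Fin.snoc_castSucc]
            exact hmono i' j' (by simpa using hij)
          · subst hi
            have : (j' : Fin N).castSucc = Fin.last N := le_antisymm (Fin.le_last _) hij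
            rw [this]
        · subst hj; simp [Fin.snoc_last]
      · rw [Fin.sum_univ_castSucc]
        simpa using hsum
      · simp [Fin.snoc_last]
    · intro f hf
      simp only [Finset.mem_coe, Finset.mem_filter, hQ] at hf
      rw [← hf.2.2]
      exact Fin.snoc_init_self f
    · intro g _
      simp [Fin.init_snoc]
  · -- f (last) ≠ 0 : either empty or bijection with (M, N+1, n - (N+1))
    rw [Finset.filter_filter]
    split_ifs with hn
    · refine Finset.card_nbij'
        (fun f => fun i => (⟨(f i : ℕ) - 1, by have := (f i).isLt; omega⟩ : Fin (M + 1)))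
        (fun g => fun i => (⟨(g i : ℕ) + 1, by have := (g i).isLt; omega⟩ : Fin (M + 2)))
        ?_ ?_ ?_ ?_
      · intro f hf
        simp only [Finset.mem_coe, Finset.mem_filter, Finset.mem_univ, true_and, hQ] at hf ⊢
        obtain ⟨⟨hmono, hsum⟩, hlast⟩ := hf
        have hpos : ∀ i, 1 ≤ (f i : ℕ) := by
          intro i
          have h1 := hmono i (Fin.last N) (Fin.le_last i)
          have h2 : (f (Fin.last N) : ℕ) ≠ 0 :=
            fun h => hlast (Fin.ext (h.trans (Fin.val_zero (M + 1)).symm))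
          omega
        refine ⟨fun i j hij => by have := hmono i j hij; have := hpos j; simp; omega, ?_⟩
        have : ∑ i, ((f i : ℕ) - 1) + ∑ _i : Fin (N+1), 1 = ∑ i, (f i : ℕ) := by
          rw [← Finset.sum_add_distrib]
          exact Finset.sum_congr rfl fun i _ => by have := hpos i; omega
        simp only [Finset.sum_const, Finset.card_univ, Fintype.card_fin, smul_eq_mul,
          mul_one] at this
        show ∑ i, ((f i : ℕ) - 1) = n - (N + 1)
        omega
      · intro g hg
        simp only [Finset.mem_coe, Finset.mem_filter, Finset.mem_univ, true_and, hQ] at hg ⊢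
        obtain ⟨hmono, hsum⟩ := hg
        refine ⟨⟨fun i j hij => by have := hmono i j hij; simp; omega, ?_⟩, ?_⟩
        · have : ∑ i : Fin (N+1), ((g i : ℕ) + 1) = ∑ i, (g i : ℕ) + (N + 1) := by
            rw [Finset.sum_add_distrib]
            simp
          show ∑ i, ((g i : ℕ) + 1) = n
          omega
        · exact fun h => absurd ((congrArg Fin.val h).trans (Fin.val_zero (M + 1))) (Nat.succ_ne_zero _)
      · intro f hf
        simp only [Finset.mem_coe, Finset.mem_filter, Finset.mem_univ, true_and, hQ] at hf
        obtain ⟨⟨hmono, _⟩, hlast⟩ := hf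
        funext i
        have h2 : (f (Fin.last N) : ℕ) ≠ 0 := fun h => hlast (Fin.ext (h.trans (Fin.val_zero (M + 1)).symm))
        have h1 := hmono i (Fin.last N) (Fin.le_last i)
        simp [Fin.ext_iff]
        omega
      · intro g _
        funext i
        simp [Fin.ext_iff]
    · rw [Finset.card_eq_zero, Finset.filter_eq_empty_iff]
      rintro f - ⟨⟨hmono, hsum⟩, hlast⟩
      have h2 : (f (Fin.last N) : ℕ) ≠ 0 := fun h => hlast (Fin.ext (h.trans (Fin.val_zero (M + 1)).symm))
      have hpos : ∀ i : Fin (N+1), 1 ≤ (f i : ℕ) :=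
        fun i => by have := hmono i (Fin.last N) (Fin.le_last i); omega
      have : ∑ _i : Fin (N+1), 1 ≤ ∑ i, (f i : ℕ) :=
        Finset.sum_le_sum fun i _ => hpos i
      simp only [Finset.sum_const, Finset.card_univ, Fintype.card_fin, smul_eq_mul,
        mul_one] at this
      omega

lemma restrictedPartitions_zero_left (N : ℕ) : restrictedPartitions 0 N 0 = 1 := by
  unfold restrictedPartitions
  rw [Finset.filter_true_of_mem, Finset.card_univ]
  · simp
  · intro f _
    refine ⟨fun i j _ => ?_, ?_⟩
    · have h1 : (f j : ℕ) = 0 := by omega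
      have h2 : (f i : ℕ) = 0 := by omega
      omega
    · exact Finset.sum_eq_zero fun i _ => by omega

open Polynomial

noncomputable def Pq (k : ℕ) : Polynomial ℤ := ∏ j ∈ Finset.range k, (1 - X ^ (j + 1))

noncomputable def Gq (M N : ℕ) : Polynomial ℤ :=
  ∑ n ∈ Finset.range (M * N + 1), (restrictedPartitions M N n : Polynomial ℤ) * X ^ n

lemma Gq_eq (M N B : ℕ) (h : M * N + 1 ≤ B) :
    ∑ n ∈ Finset.range B, (restrictedPartitions M N n : Polynomial ℤ) * X ^ n = Gq M N := by
  refine (Finset.sum_subset (Finset.range_subset_range.2 h) fun n _ hn => ?_).symm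
  rw [Finset.mem_range, not_lt] at hn
  rw [restrictedPartitions_vanish M N n (by omega)]
  simp

lemma Gq_zero_right (M : ℕ) : Gq M 0 = 1 := by
  simp [Gq, restrictedPartitions_zero_right]

lemma Gq_zero_left (N : ℕ) : Gq 0 N = 1 := by
  simp [Gq, restrictedPartitions_zero_left]

lemma Gq_rec (M N : ℕ) : Gq (M + 1) (N + 1) = Gq (M + 1) N + X ^ (N + 1) * Gq M (N + 1) := by
  have hT : N + 1 ≤ (M + 1) * (N + 1) + 1 := by nlinarith
  have hmul : (M + 1) * (N + 1) + 1 - (N + 1) = M * (N + 1) + 1 := by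
    rw [Nat.succ_mul]; omega
  calc Gq (M + 1) (N + 1)
      = ∑ n ∈ Finset.range ((M + 1) * (N + 1) + 1),
          ((restrictedPartitions (M + 1) N n : Polynomial ℤ) * X ^ n
            + (if N + 1 ≤ n then (restrictedPartitions M (N + 1) (n - (N + 1)) : Polynomial ℤ)
                else 0) * X ^ n) := by
        refine Finset.sum_congr rfl fun n _ => ?_
        rw [restrictedPartitions_rec]
        push_cast
        split_ifs <;> ring
    _ = Gq (M + 1) N
          + ∑ n ∈ Finset.range ((M + 1) * (N + 1) + 1),
            (if N + 1 ≤ n then (restrictedPartitions M (N + 1) (n - (N + 1)) : Polynomial ℤ)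
              else 0) * X ^ n := by
        rw [Finset.sum_add_distrib, Gq_eq _ _ _ (by nlinarith)]
    _ = Gq (M + 1) N + X ^ (N + 1) * Gq M (N + 1) := by
        congr 1
        rw [Finset.range_eq_Ico,
          ← Finset.sum_Ico_consecutive _ (Nat.zero_le (N + 1)) hT,
          Finset.sum_eq_zero (s := Finset.Ico 0 (N + 1))
            (fun n hn => by
              rw [Finset.mem_Ico] at hn
              rw [if_neg (by omega)]
              simp),
          zero_add, Finset.sum_Ico_eq_sum_range, hmul, Gq, Finset.mul_sum]
        refine Finset.sum_congr rfl fun m _ => ?_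
        rw [if_pos (by omega), Nat.add_sub_cancel_left, pow_add]
        ring

lemma Gq_main (M : ℕ) : ∀ N, Gq M N * (Pq M * Pq N) = Pq (M + N) := by
  induction M with
  | zero =>
    intro N
    simp [Gq_zero_left, Pq]
  | succ M ihM =>
    intro N
    induction N with
    | zero =>
      simp [Gq_zero_right, Pq]
    | succ N ihN =>
      have h1 := ihN
      have h2 := ihM (N + 1)
      have e1 : Pq (M + 1) = Pq M * (1 - X ^ (M + 1)) := Finset.prod_range_succ _ _
      have e2 : Pq (N + 1) = Pq N * (1 - X ^ (N + 1)) := Finset.prod_range_succ _ _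
      have e3 : Pq (M + 1 + (N + 1)) = Pq (M + N + 1) * (1 - X ^ (M + N + 2)) := by
        rw [show M + 1 + (N + 1) = (M + N + 1) + 1 by omega]
        exact Finset.prod_range_succ _ _
      rw [show M + 1 + N = M + N + 1 from by omega] at h1
      rw [show M + (N + 1) = M + N + 1 from by omega] at h2
      rw [Gq_rec, e3, e1, e2]
      rw [e1] at h1
      rw [e2] at h2
      linear_combination (1 - X ^ (N + 1)) * h1 + (X ^ (N + 1) * (1 - X ^ (M + 1))) * h2

open Polynomial in
/-- ∑_{n=0}^{MN} p(M,N,n) q^n is the Gaussian binomial coefficient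
[M+N choose N]_q, stated with denominators cleared. -/
theorem restrictedPartitions_generating_function (M N : ℕ) :
    (∑ n ∈ Finset.range (M * N + 1),
        (restrictedPartitions M N n : Polynomial ℤ) * X ^ n) *
      ((∏ j ∈ Finset.range M, (1 - X ^ (j + 1))) *
        ∏ j ∈ Finset.range N, (1 - X ^ (j + 1)))
      = ∏ j ∈ Finset.range (M + N), (1 - X ^ (j + 1)) := by
  exact Gq_main M N
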